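/- arXiv:1512.07447 — 3 statements merged into one kernel-verified Lean document; each statement's English description precedes it below -/
import Mathlib

section
/- Let 0 < x_1 < y_1 < x_2 < y_2 < ... < x_n < y_n < 1 and let ρ: (0, ∞) → [0, ∞) be measurable with ∫_{x_i}^{y_i} ρ(r) dr ≥ 1 for each i = 1, ..., n. Then ∫_{0}^{∞} ρ(r)² · r dr ≥ n² / log(1/x_1). -/
open MeasureTheory

lemma seg_est (a b : ℝ) (ha : 0 < a) (hab : a < b) (ρ : ℝ → ℝ) (hmeas : Measurable ρ)
    (hadm : 1 ≤ ∫⁻ r in Set.Ioc a b, ENNReal.ofReal (ρ r)) :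
    ENNReal.ofReal (Real.log (b / a))⁻¹ ≤ ∫⁻ r in Set.Ioc a b, ENNReal.ofReal (ρ r ^ 2 * r) := by
  have hb : 0 < b := ha.trans hab
  have hlog : 0 < Real.log (b / a) := Real.log_pos ((one_lt_div ha).mpr hab)
  set μ := volume.restrict (Set.Ioc a b) with hμ
  set A := ∫⁻ r in Set.Ioc a b, ENNReal.ofReal (ρ r ^ 2 * r) with hA
  set T := ENNReal.ofReal (Real.log (b / a)) with hT
  set f : ℝ → ENNReal := fun r => ENNReal.ofReal (ρ r) * ENNReal.ofReal r ^ (1/2 : ℝ) with hf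
  set g : ℝ → ENNReal := fun r => (ENNReal.ofReal r)⁻¹ ^ (1/2 : ℝ) with hg
  have hfm : AEMeasurable f μ :=
    (hmeas.ennreal_ofReal.mul (measurable_id.ennreal_ofReal.pow_const _)).aemeasurable
  have hgm : AEMeasurable g μ :=
    (measurable_id.ennreal_ofReal.inv.pow_const _).aemeasurable
  -- pointwise a.e.: ofReal (ρ r) = f r * g r on Ioc a b
  have hae : ∀ᵐ r ∂μ, ENNReal.ofReal (ρ r) = (f * g) r := by
    rw [hμ, ae_restrict_iff' measurableSet_Ioc]
    filter_upwards with r hr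
    have hr0 : 0 < r := ha.trans hr.1
    have hne : ENNReal.ofReal r ≠ 0 := (ENNReal.ofReal_pos.mpr hr0).ne'
    have hnt : ENNReal.ofReal r ≠ ⊤ := ENNReal.ofReal_ne_top
    simp only [hf, hg, Pi.mul_apply]
    rw [mul_assoc, ← ENNReal.mul_rpow_of_ne_top hnt (ENNReal.inv_ne_top.mpr hne), ENNReal.mul_inv_cancel hne hnt,
      ENNReal.one_rpow, mul_one]
  have h22 : (2:ℝ).HolderConjugate 2 := Real.HolderConjugate.two_two
  have holder := ENNReal.lintegral_mul_le_Lp_mul_Lq μ h22 hfm hgm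
  -- ∫⁻ f^2 ≤ A
  have hf2 : (∫⁻ r, f r ^ (2:ℝ) ∂μ) ≤ A := by
    rw [hA, hμ]
    refine lintegral_mono_ae ?_
    filter_upwards [ae_restrict_mem measurableSet_Ioc] with r hr
    have hr0 : 0 < r := ha.trans hr.1
    have heq : f r ^ (2:ℝ) = ENNReal.ofReal (ρ r) ^ (2:ℕ) * ENNReal.ofReal r := by
      rw [hf, ENNReal.mul_rpow_of_ne_top ENNReal.ofReal_ne_top (by simp),
        ← ENNReal.rpow_mul, ← ENNReal.rpow_natCast (ENNReal.ofReal (ρ r)) 2]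
      norm_num
    rw [heq]
    calc ENNReal.ofReal (ρ r) ^ (2:ℕ) * ENNReal.ofReal r
        ≤ ENNReal.ofReal (ρ r ^ 2) * ENNReal.ofReal r := by
          gcongr
          rcases le_or_gt 0 (ρ r) with h | h
          · exact (ENNReal.ofReal_pow h 2).symm.le
          · rw [ENNReal.ofReal_of_nonpos h.le]
            simp
      _ = ENNReal.ofReal (ρ r ^ 2 * r) := (ENNReal.ofReal_mul (by positivity)).symm
  -- ∫⁻ g^2 = T
  have hg2 : (∫⁻ r, g r ^ (2:ℝ) ∂μ) = T := by
    have hptw : ∀ᵐ r ∂μ, g r ^ (2:ℝ) = ENNReal.ofReal r⁻¹ := by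
      rw [hμ, ae_restrict_iff' measurableSet_Ioc]
      filter_upwards with r hr
      have hr0 : 0 < r := ha.trans hr.1
      rw [hg, ← ENNReal.rpow_mul, ← ENNReal.ofReal_inv_of_pos hr0]
      norm_num
    rw [lintegral_congr_ae hptw, hμ, hT]
    have hInt : IntegrableOn (fun r : ℝ => r⁻¹) (Set.Ioc a b) := by
      have := (intervalIntegral.intervalIntegrable_inv (μ := volume) (f := fun x : ℝ => x) (a := a) (b := b)
        (fun x hx => by
          have : 0 < x := lt_of_lt_of_le (lt_min ha hb) (by simpa using hx.1)
          exact this.ne') continuousOn_id)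
      exact this.1
    rw [← ofReal_integral_eq_lintegral_ofReal hInt]
    · congr 1
      rw [← intervalIntegral.integral_of_le hab.le]
      exact integral_inv_of_pos ha hb
    · filter_upwards [ae_restrict_mem measurableSet_Ioc] with r hr
      exact (inv_pos.mpr (ha.trans hr.1)).le
  -- combine
  have key : 1 ≤ A ^ (1/2 : ℝ) * T ^ (1/2 : ℝ) := by
    calc (1:ENNReal) ≤ ∫⁻ r, ENNReal.ofReal (ρ r) ∂μ := hadm
      _ = ∫⁻ r, (f * g) r ∂μ := lintegral_congr_ae hae
      _ ≤ (∫⁻ r, f r ^ (2:ℝ) ∂μ) ^ (1/2:ℝ) * (∫⁻ r, g r ^ (2:ℝ) ∂μ) ^ (1/2:ℝ) := holder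
      _ ≤ A ^ (1/2:ℝ) * T ^ (1/2:ℝ) := by rw [hg2]; gcongr
  have hTne : T ≠ 0 := (ENNReal.ofReal_pos.mpr hlog).ne'
  have hTnt : T ≠ ⊤ := ENNReal.ofReal_ne_top
  have h1AT : 1 ≤ A * T := by
    have := ENNReal.rpow_le_rpow key (by norm_num : (0:ℝ) ≤ 2)
    rwa [ENNReal.one_rpow, ENNReal.mul_rpow_of_nonneg _ _ (by norm_num : (0:ℝ) ≤ 2),
      ← ENNReal.rpow_mul, ← ENNReal.rpow_mul, one_div, inv_mul_cancel₀ (two_ne_zero),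
      ENNReal.rpow_one, ENNReal.rpow_one] at this
  rw [ENNReal.ofReal_inv_of_pos hlog, ← hT]
  calc T⁻¹ = T⁻¹ * 1 := (mul_one _).symm
    _ ≤ T⁻¹ * (A * T) := by gcongr
    _ = A * (T⁻¹ * T) := by ring
    _ = A := by rw [ENNReal.inv_mul_cancel hTne hTnt, mul_one]

lemma tel_sum (g : ℕ → ℝ) (n : ℕ) :
    ∑ i ∈ Finset.Icc 1 n, (g (i+1) - g i) = g (n+1) - g 1 := by
  induction n with
  | zero => simp
  | succ k ih => rw [Finset.sum_Icc_succ_top (by omega), ih]; ring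

theorem stmt_5 (n : ℕ) (hn : 1 ≤ n) (x y : ℕ → ℝ)
    (hx1 : 0 < x 1)
    (hxy : ∀ i, 1 ≤ i → i ≤ n → x i < y i)
    (hyx : ∀ i, 1 ≤ i → i < n → y i < x (i + 1))
    (hyn : y n < 1)
    (ρ : ℝ → ℝ) (hmeas : Measurable ρ) (hnonneg : ∀ r, 0 < r → 0 ≤ ρ r)
    (hadm : ∀ i, 1 ≤ i → i ≤ n →
      1 ≤ ∫⁻ r in Set.Ioc (x i) (y i), ENNReal.ofReal (ρ r)) :
    ENNReal.ofReal ((n : ℝ) ^ 2 / Real.log (1 / x 1)) ≤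
      ∫⁻ r in Set.Ioi (0 : ℝ), ENNReal.ofReal (ρ r ^ 2 * r) := by
  -- chain facts
  have chain : ∀ j, 1 ≤ j → j ≤ n → 0 < x j ∧ ∀ i, 1 ≤ i → i < j → y i ≤ x j := by
    intro j hj
    induction j, hj using Nat.le_induction with
    | base => exact fun _ => ⟨hx1, fun i hi hij => absurd hij (by omega)⟩
    | succ k hk ih =>
      intro hkn
      have hk_le : k ≤ n := by omega
      obtain ⟨hxk, hyk⟩ := ih hk_le
      have hxky : x k < y k := hxy k hk hk_le
      have hyxk : y k < x (k+1) := hyx k hk (by omega)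
      refine ⟨hxk.trans (hxky.trans hyxk), fun i hi hik => ?_⟩
      rcases Nat.lt_succ_iff_lt_or_eq.mp hik with h | h
      · exact (hyk i hi h).trans (hxky.trans hyxk).le
      · subst h; exact hyxk.le
  have hxpos : ∀ i, 1 ≤ i → i ≤ n → 0 < x i := fun i h1 h2 => (chain i h1 h2).1
  have hypos : ∀ i, 1 ≤ i → i ≤ n → 0 < y i :=
    fun i h1 h2 => (hxpos i h1 h2).trans (hxy i h1 h2)
  set t : ℕ → ℝ := fun i => Real.log (y i / x i) with ht
  have htpos : ∀ i ∈ Finset.Icc 1 n, 0 < t i := by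
    intro i hi
    rw [Finset.mem_Icc] at hi
    exact Real.log_pos ((one_lt_div (hxpos i hi.1 hi.2)).mpr (hxy i hi.1 hi.2))
  set L := Real.log (1 / x 1) with hL
  set S := ∑ i ∈ Finset.Icc 1 n, t i with hS
  -- S ≤ L
  have hSL : S ≤ L := by
    set g : ℕ → ℝ := fun i => if i ≤ n then Real.log (x i) else 0 with hg
    have hterm : ∀ i ∈ Finset.Icc 1 n, t i ≤ g (i+1) - g i := by
      intro i hi
      rw [Finset.mem_Icc] at hi
      have hgx : g i = Real.log (x i) := by simp [hg, hi.2]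
      have hti : t i = Real.log (y i) - Real.log (x i) := by
        simp only [ht]
        exact Real.log_div (hypos i hi.1 hi.2).ne' (hxpos i hi.1 hi.2).ne'
      rw [hti, hgx]
      have : Real.log (y i) ≤ g (i+1) := by
        rcases lt_or_eq_of_le hi.2 with h | h
        · have : g (i+1) = Real.log (x (i+1)) := by simp only [hg]; rw [if_pos (by omega)]
          rw [this]
          exact Real.log_le_log (hypos i hi.1 hi.2) (hyx i hi.1 h).le
        · have : g (i+1) = 0 := by simp only [hg]; rw [if_neg (by omega)]
          rw [this, h]
          exact Real.log_nonpos (hypos n (by omega) le_rfl).le hyn.le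
      linarith
    calc S ≤ ∑ i ∈ Finset.Icc 1 n, (g (i+1) - g i) := Finset.sum_le_sum hterm
      _ = g (n+1) - g 1 := tel_sum g n
      _ = 0 - Real.log (x 1) := by simp [hg, hn]
      _ = L := by rw [hL, one_div, Real.log_inv]; ring
  have hSpos : 0 < S := Finset.sum_pos htpos (by simp [Finset.Nonempty]; exact ⟨1, by omega⟩)
  have hLpos : 0 < L := hSpos.trans_le hSL
  -- Cauchy-Schwarz for sums
  set I := ∑ i ∈ Finset.Icc 1 n, (t i)⁻¹ with hI
  have hCS : (n:ℝ)^2 ≤ S * I := by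
    have := Finset.sum_mul_sq_le_sq_mul_sq (Finset.Icc 1 n)
      (fun i => Real.sqrt (t i)) (fun i => (Real.sqrt (t i))⁻¹)
    have h1 : ∑ i ∈ Finset.Icc 1 n, Real.sqrt (t i) * (Real.sqrt (t i))⁻¹ = (n:ℝ) := by
      rw [Finset.sum_congr rfl (fun i hi => mul_inv_cancel₀
        (Real.sqrt_ne_zero'.mpr (htpos i hi)))]
      simp
    have h2 : ∑ i ∈ Finset.Icc 1 n, Real.sqrt (t i) ^ 2 = S := by
      exact Finset.sum_congr rfl (fun i hi => Real.sq_sqrt (htpos i hi).le)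
    have h3 : ∑ i ∈ Finset.Icc 1 n, ((Real.sqrt (t i))⁻¹) ^ 2 = I := by
      refine Finset.sum_congr rfl (fun i hi => ?_)
      rw [inv_pow, Real.sq_sqrt (htpos i hi).le]
    rw [h1, h2, h3] at this
    exact this
  have hreal : (n:ℝ)^2 / L ≤ I := by
    rw [div_le_iff₀ hLpos]
    calc (n:ℝ)^2 ≤ S * I := hCS
      _ ≤ L * I := by
        have hInn : 0 ≤ I := Finset.sum_nonneg fun i hi => (inv_pos.mpr (htpos i hi)).le
        exact mul_le_mul_of_nonneg_right hSL hInn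
      _ = I * L := mul_comm _ _
  -- assemble in ENNReal
  have hmono : ENNReal.ofReal ((n:ℝ)^2 / L) ≤ ∑ i ∈ Finset.Icc 1 n,
      ∫⁻ r in Set.Ioc (x i) (y i), ENNReal.ofReal (ρ r ^ 2 * r) := by
    calc ENNReal.ofReal ((n:ℝ)^2 / L) ≤ ENNReal.ofReal I := ENNReal.ofReal_le_ofReal hreal
      _ = ∑ i ∈ Finset.Icc 1 n, ENNReal.ofReal ((t i)⁻¹) :=
          ENNReal.ofReal_sum_of_nonneg fun i hi => (inv_pos.mpr (htpos i hi)).le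
      _ ≤ _ := by
          refine Finset.sum_le_sum fun i hi => ?_
          rw [Finset.mem_Icc] at hi
          exact seg_est (x i) (y i) (hxpos i hi.1 hi.2) (hxy i hi.1 hi.2) ρ hmeas
            (hadm i hi.1 hi.2)
  refine hmono.trans ?_
  have hdisj : Set.PairwiseDisjoint ↑(Finset.Icc 1 n)
      (fun i => Set.Ioc (x i) (y i)) := by
    intro i hi j hj hij
    simp only [Finset.coe_Icc, Set.mem_Icc] at hi hj
    have key : ∀ a b : ℕ, 1 ≤ a → b ≤ n → a < b →
        Disjoint (Set.Ioc (x a) (y a)) (Set.Ioc (x b) (y b)) := by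
      intro a b ha hb hab
      have hyx' : y a ≤ x b := (chain b (by omega) hb).2 a ha hab
      rw [Set.Ioc_disjoint_Ioc]
      exact le_trans (min_le_left _ _) (hyx'.trans (le_max_right _ _))
    rcases lt_or_gt_of_ne hij with h | h
    · exact key i j hi.1 hj.2 h
    · exact (key j i hj.1 hi.2 h).symm
  rw [← lintegral_biUnion_finset hdisj (fun i _ => measurableSet_Ioc)]
  refine lintegral_mono_set ?_
  intro r hr
  simp only [Set.mem_iUnion] at hr
  obtain ⟨i, hi, hri⟩ := hr
  rw [Finset.mem_Icc] at hi
  exact (hxpos i hi.1 hi.2).trans hri.1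
end

section
/- Let h_0(z) = z·e^{−i c_2 log^{3/2}(1/|z|)} for z ∈ 𝔻 \ {0} and h_0(z) = z for z ∉ 𝔻, where c_2 ∈ ℝ. Then |h_0(z)| = |z| for all z, and for every constant c > 0 there exists r_0 > 0 such that for all 0 < r < r_0, |arg(h_0(r))| = |c_2| log^{3/2}(1/r) > c·|log|h_0(r)|| = c·log(1/r). -/
theorem stmt_13 (c₂ : ℝ) (hc₂ : c₂ ≠ 0)
    (h₀ : ℂ → ℂ)
    (hin : ∀ z : ℂ, z ≠ 0 → ‖z‖ < 1 →
      h₀ z = z * Complex.exp (-Complex.I * c₂ *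
        ((Real.log (1 / ‖z‖)) ^ ((3 : ℝ) / 2) : ℝ)))
    (hout : ∀ z : ℂ, 1 ≤ ‖z‖ → h₀ z = z) :
    (∀ z : ℂ, z ≠ 0 → ‖h₀ z‖ = ‖z‖) ∧
    (∀ c : ℝ, 0 < c → ∃ r₀ : ℝ, 0 < r₀ ∧ ∀ r : ℝ, 0 < r → r < r₀ →
      |c₂| * (Real.log (1 / r)) ^ ((3 : ℝ) / 2) >
        c * |Real.log ‖h₀ r‖| ∧
      c * |Real.log ‖h₀ r‖| = c * Real.log (1 / r)) := by
  have habs : ∀ z : ℂ, z ≠ 0 → ‖h₀ z‖ = ‖z‖ := by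
    intro z hz
    rcases lt_or_ge ‖z‖ 1 with h1 | h1
    · rw [hin z hz h1, norm_mul, Complex.norm_exp]
      have : (-Complex.I * c₂ *
          ((Real.log (1 / ‖z‖)) ^ ((3 : ℝ) / 2) : ℝ)).re = 0 := by
        simp [Complex.mul_re, Complex.mul_im]
      rw [this, Real.exp_zero, mul_one]
    · rw [hout z h1]
  refine ⟨habs, ?_⟩
  intro c hc
  have hc₂' : 0 < |c₂| := abs_pos.mpr hc₂
  refine ⟨min 1 (Real.exp (-((c / |c₂|) ^ 2 + 1))), by positivity, ?_⟩
  intro r hr hrlt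
  have hr1 : r < 1 := lt_of_lt_of_le hrlt (min_le_left _ _)
  have hrz : (r : ℂ) ≠ 0 := by exact_mod_cast (ne_of_gt hr)
  have habsr : ‖(r : ℂ)‖ = r := by
    rw [Complex.norm_real, Real.norm_eq_abs, abs_of_pos hr]
  have hL : 0 < Real.log (1 / r) := Real.log_pos (by rw [lt_div_iff₀ hr]; simpa)
  set L := Real.log (1 / r) with hLdef
  have hlogabs : |Real.log ‖h₀ (r : ℂ)‖| = L := by
    rw [habs _ hrz, habsr, hLdef, Real.log_div one_ne_zero (ne_of_gt hr),
      Real.log_one, zero_sub, abs_of_nonpos (Real.log_nonpos hr.le hr1.le)]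
  have hLbig : (c / |c₂|) ^ 2 < L := by
    have hre : r < Real.exp (-((c / |c₂|) ^ 2 + 1)) :=
      lt_of_lt_of_le hrlt (min_le_right _ _)
    have := Real.log_lt_log hr hre
    rw [Real.log_exp] at this
    have : (c / |c₂|) ^ 2 + 1 < -Real.log r := by linarith
    have hLeq : L = -Real.log r := by
      rw [hLdef, Real.log_div one_ne_zero (ne_of_gt hr), Real.log_one, zero_sub]
    linarith
  have hsqrt : c / |c₂| < Real.sqrt L := by
    rw [show (c/|c₂|)^2 = (c/|c₂|) * (c/|c₂|) by ring] at hLbig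
    exact lt_of_pow_lt_pow_left₀ 2 (Real.sqrt_nonneg _)
      (by rw [Real.sq_sqrt hL.le, sq]; exact hLbig)
  have hckey : c < |c₂| * Real.sqrt L := by
    rwa [div_lt_iff₀ hc₂', mul_comm] at hsqrt
  have hpow : L ^ ((3 : ℝ) / 2) = L * Real.sqrt L := by
    rw [Real.sqrt_eq_rpow, show (3:ℝ)/2 = 1 + 1/2 by norm_num,
      Real.rpow_add hL, Real.rpow_one]
  constructor
  · rw [hlogabs, hpow]
    calc c * L < (|c₂| * Real.sqrt L) * L := by
          exact mul_lt_mul_of_pos_right hckey hL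
      _ = |c₂| * (L * Real.sqrt L) := by ring
  · rw [hlogabs]
end

section
/- Let c_1 > 0, c_2 ∈ ℝ. For z in B(0,1/2)\{0} define h(z) = (z/|z|)|z|^{c_1 log(1/|z|) − i c_2 log(1/|z|)}. Then the Wirtinger derivatives of h satisfy |h_z(z)| = e^{−c_1 log²(1/|z|)}/|z| · √((1/2 + c_1 log(1/|z|))² + c_2² log²(1/|z|)) and |h_{z̄}(z)| = e^{−c_1 log²(1/|z|)}/|z| · √((c_1 log(1/|z|) − 1/2)² + c_2² log²(1/|z|)); in particular |h_{z̄}(z)| < |h_z(z)| everywhere, so h is sense-preserving with |μ_h(z)| = √((c_1 L − 1/2)² + c_2²L²)/√((c_1 L + 1/2)² + c_2²L²), L = log(1/|z|). -/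
set_option maxHeartbeats 1000000 in
theorem stmt_18 (c₁ c₂ : ℝ) (hc₁ : 0 < c₁)
    (h : ℂ → ℂ)
    (hdef : ∀ z : ℂ, z ≠ 0 → ‖z‖ < 1 / 2 →
      h z = (z / (‖z‖ : ℂ)) *
        Complex.exp (((c₁ * Real.log (1 / ‖z‖) : ℝ) -
          Complex.I * (c₂ * Real.log (1 / ‖z‖) : ℝ)) *
          (Real.log (‖z‖) : ℝ))) :
    ∀ z : ℂ, z ≠ 0 → ‖z‖ < 1 / 2 →
      ‖((fderiv ℝ h z 1 - Complex.I * fderiv ℝ h z Complex.I) / 2)‖ =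
        Real.exp (-c₁ * Real.log (1 / ‖z‖) ^ 2) / ‖z‖ *
          Real.sqrt ((1 / 2 + c₁ * Real.log (1 / ‖z‖)) ^ 2 +
            c₂ ^ 2 * Real.log (1 / ‖z‖) ^ 2) ∧
      ‖((fderiv ℝ h z 1 + Complex.I * fderiv ℝ h z Complex.I) / 2)‖ =
        Real.exp (-c₁ * Real.log (1 / ‖z‖) ^ 2) / ‖z‖ *
          Real.sqrt ((c₁ * Real.log (1 / ‖z‖) - 1 / 2) ^ 2 +
            c₂ ^ 2 * Real.log (1 / ‖z‖) ^ 2) ∧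
      ‖((fderiv ℝ h z 1 + Complex.I * fderiv ℝ h z Complex.I) / 2)‖ <
        ‖((fderiv ℝ h z 1 - Complex.I * fderiv ℝ h z Complex.I) / 2)‖ ∧
      ‖(((fderiv ℝ h z 1 + Complex.I * fderiv ℝ h z Complex.I) / 2) /
          ((fderiv ℝ h z 1 - Complex.I * fderiv ℝ h z Complex.I) / 2))‖ =
        Real.sqrt ((c₁ * Real.log (1 / ‖z‖) - 1 / 2) ^ 2 +
            c₂ ^ 2 * Real.log (1 / ‖z‖) ^ 2) /
        Real.sqrt ((c₁ * Real.log (1 / ‖z‖) + 1 / 2) ^ 2 +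
            c₂ ^ 2 * Real.log (1 / ‖z‖) ^ 2) := by
  intro z hz0 hzlt
  have hr0 : (0:ℝ) < ‖z‖ := norm_pos_iff.mpr hz0
  set C : ℂ := (-(c₁:ℂ) + (c₂:ℂ) * Complex.I) / 4 with hCdef
  set q : ℂ → ℝ := fun w => w.re*w.re+w.im*w.im with hqdef
  set G : ℝ → ℂ := fun s => Complex.exp (C * (Real.log s : ℂ)^2 - (Real.log s : ℂ)/2) with hGdef
  -- h agrees with the model function near z
  have key : ∀ w : ℂ, w ≠ 0 → ‖w‖ < 1/2 → h w = w * G (q w) := by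
    intro w hw0 hwlt
    have hw0' : (0:ℝ) < ‖w‖ := norm_pos_iff.mpr hw0
    have hqw : q w = ‖w‖ ^ 2 := by
      show w.re*w.re+w.im*w.im = _
      rw [← Complex.normSq_apply, Complex.sq_norm]
    have hlq : Real.log (q w) = 2 * Real.log (‖w‖) := by
      rw [hqw, Real.log_pow]; push_cast; ring
    have hinvw : Real.log (1 / ‖w‖) = -Real.log (‖w‖) := by
      rw [one_div, Real.log_inv]
    have habsw : ((‖w‖ : ℝ) : ℂ) = Complex.exp ((Real.log (‖w‖) : ℂ)) := by
      rw [← Complex.ofReal_exp, Real.exp_log hw0']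
    rw [hdef w hw0 hwlt, hGdef]
    simp only
    rw [hlq, hinvw, div_eq_mul_inv, habsw, ← Complex.exp_neg, mul_assoc, ← Complex.exp_add]
    congr 1
    rw [hCdef]
    push_cast
    ring
  -- basic facts at z
  have hq : q z = ‖z‖ ^ 2 := by
    show z.re*z.re+z.im*z.im = _
    rw [← Complex.normSq_apply, Complex.sq_norm]
  have hs0 : (0:ℝ) < q z := by rw [hq]; positivity
  have hls : Real.log (q z) = 2 * Real.log (‖z‖) := by
    rw [hq, Real.log_pow]; push_cast; ring
  have hqne : ((q z : ℝ) : ℂ) ≠ 0 := by exact_mod_cast ne_of_gt hs0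
  set t : ℝ := Real.log (‖z‖) with htdef
  set K : ℂ := 4*C*(t:ℂ) - 1/2 with hKdef
  set g' : ℂ := G (q z) * K * ((q z : ℝ) : ℂ)⁻¹ with hg'def
  -- derivative of G at q z
  have hlogC : HasDerivAt (fun y : ℝ => ((Real.log y : ℝ) : ℂ)) (((q z)⁻¹ : ℝ) : ℂ) (q z) :=
    (Real.hasDerivAt_log hs0.ne').ofReal_comp
  have hu := ((hlogC.mul hlogC).const_mul C).sub (hlogC.div_const 2)
  have hGd := hu.cexp
  have hGd' : HasDerivAt G g' (q z) := by
    have heq : G = fun s : ℝ => Complex.exp (C * (((Real.log s : ℝ):ℂ) * ((Real.log s : ℝ):ℂ))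
        - ((Real.log s : ℝ):ℂ)/2) := by
      funext y; rw [hGdef]; simp only [sq]
    rw [heq]
    convert hGd using 1
    · rfl
    rw [hg'def, hGdef, hKdef]
    simp only [Pi.sub_apply, Pi.mul_apply, hls, sq]
    push_cast
    field_simp
    ring
  -- derivative of q
  have hre : HasFDerivAt (fun w : ℂ => w.re) Complex.reCLM z := Complex.reCLM.hasFDerivAt
  have him : HasFDerivAt (fun w : ℂ => w.im) Complex.imCLM z := Complex.imCLM.hasFDerivAt
  have hq' : HasFDerivAt q ((z.re • Complex.reCLM + z.re • Complex.reCLM)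
      + (z.im • Complex.imCLM + z.im • Complex.imCLM)) z := by
    rw [hqdef]
    exact (hre.mul hre).add (him.mul him)
  have hcomp := (hGd'.hasFDerivAt).comp z hq'
  have hmul := (hasFDerivAt_id z).mul hcomp
  -- transfer to h
  have hUopen : IsOpen {w : ℂ | w ≠ 0 ∧ ‖w‖ < 1/2} := by
    apply IsOpen.inter isOpen_ne
    exact isOpen_lt continuous_norm continuous_const
  have hmem : {w : ℂ | w ≠ 0 ∧ ‖w‖ < 1/2} ∈ nhds z :=
    hUopen.mem_nhds ⟨hz0, hzlt⟩
  have hEq : h =ᶠ[nhds z] (fun y => id y * (G ∘ q) y) :=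
    Filter.eventuallyEq_of_mem hmem (fun w hw => key w hw.1 hw.2)
  have hh : HasFDerivAt h _ z := hmul.congr_of_eventuallyEq hEq
  have hfd := hh.fderiv
  -- evaluate
  have heval1 : fderiv ℝ h z 1 = G (q z) + (z.re:ℂ) * (z * g') * 2 := by
    rw [hfd]
    simp [ContinuousLinearMap.comp_apply, ContinuousLinearMap.smulRight_apply, Function.comp]
    ring
  have hevalI : fderiv ℝ h z Complex.I
      = Complex.I * G (q z) + (z.im:ℂ) * (z * g') * 2 := by
    rw [hfd]
    simp [ContinuousLinearMap.comp_apply, ContinuousLinearMap.smulRight_apply, Function.comp]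
    ring
  -- the two Wirtinger derivatives
  have hzc : ((z.re:ℂ) - Complex.I*(z.im:ℂ)) * z = ((q z : ℝ) : ℂ) := by
    have : ((q z : ℝ) : ℂ) = (z.re:ℂ)*(z.re:ℂ) + (z.im:ℂ)*(z.im:ℂ) := by
      show ((z.re*z.re+z.im*z.im : ℝ) : ℂ) = _
      push_cast; ring
    rw [this]
    apply Complex.ext <;> simp [Complex.mul_re, Complex.mul_im] <;> ring
  have hwz : (fderiv ℝ h z 1 - Complex.I * fderiv ℝ h z Complex.I) / 2
      = G (q z) * (1 + K) := by
    have hu1 : (((q z : ℝ) : ℂ))⁻¹ * ((q z : ℝ) : ℂ) = 1 := inv_mul_cancel₀ hqne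
    rw [heval1, hevalI, hg'def]
    linear_combination (G (q z) * K * (((q z : ℝ) : ℂ))⁻¹) * hzc + (G (q z) * K) * hu1 +
      (-(G (q z))/2) * Complex.I_sq
  have hwzb : (fderiv ℝ h z 1 + Complex.I * fderiv ℝ h z Complex.I) / 2
      = z * z * g' := by
    rw [heval1, hevalI]
    have h1 := Complex.re_add_im z
    have h2 := Complex.I_sq
    linear_combination (z * g') * h1 + (G (q z)/2) * h2
  -- absolute values
  have hform : C * ((Real.log (q z) : ℝ):ℂ)^2 - ((Real.log (q z) : ℝ):ℂ)/2
      = ((-c₁*t^2 - t : ℝ):ℂ) + ((c₂*t^2 : ℝ):ℂ)*Complex.I := by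
    rw [hls, hCdef]; push_cast; ring
  have habsG : ‖(G (q z))‖ = Real.exp (-c₁*t^2 - t) := by
    rw [hGdef]
    simp only
    rw [hform, Complex.norm_exp]
    congr 1
    simp only [Complex.add_re, Complex.ofReal_re, Complex.ofReal_im, Complex.mul_re,
      Complex.I_re, Complex.I_im]
    ring
  have h1K : (1:ℂ) + K = ((1/2 - c₁*t : ℝ):ℂ) + ((c₂*t : ℝ):ℂ)*Complex.I := by
    rw [hKdef, hCdef]; push_cast; ring
  have hKform : K = ((-(c₁*t) - 1/2 : ℝ):ℂ) + ((c₂*t : ℝ):ℂ)*Complex.I := by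
    rw [hKdef, hCdef]; push_cast; ring
  have habs1K : ‖(1 + K)‖ = Real.sqrt ((1/2 - c₁*t)^2 + (c₂*t)^2) := by
    rw [h1K, Complex.norm_add_mul_I]
  have habsK : ‖K‖ = Real.sqrt ((-(c₁*t) - 1/2)^2 + (c₂*t)^2) := by
    rw [hKform, Complex.norm_add_mul_I]
  have habsu : ‖(((q z : ℝ)):ℂ)‖ = q z := by
    rw [Complex.norm_real]; exact abs_of_pos hs0
  have hinv : Real.log (1 / ‖z‖) = -t := by rw [one_div, Real.log_inv]
  have hexp : Real.exp (-c₁*t^2 - t) = Real.exp (-c₁ * (-t)^2) / ‖z‖ := by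
    rw [show -c₁*t^2 - t = -c₁*(-t)^2 + -t by ring, Real.exp_add, Real.exp_neg,
      Real.exp_log hr0, div_eq_mul_inv]
  have E1 : ‖((fderiv ℝ h z 1 - Complex.I * fderiv ℝ h z Complex.I) / 2)‖ =
      Real.exp (-c₁ * Real.log (1 / ‖z‖) ^ 2) / ‖z‖ *
        Real.sqrt ((1 / 2 + c₁ * Real.log (1 / ‖z‖)) ^ 2 +
          c₂ ^ 2 * Real.log (1 / ‖z‖) ^ 2) := by
    rw [hwz, norm_mul, habsG, habs1K, hinv, hexp]
    congr 1
    congr 1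
    ring
  have E2 : ‖((fderiv ℝ h z 1 + Complex.I * fderiv ℝ h z Complex.I) / 2)‖ =
      Real.exp (-c₁ * Real.log (1 / ‖z‖) ^ 2) / ‖z‖ *
        Real.sqrt ((c₁ * Real.log (1 / ‖z‖) - 1 / 2) ^ 2 +
          c₂ ^ 2 * Real.log (1 / ‖z‖) ^ 2) := by
    rw [hwzb, hg'def]
    simp only [norm_mul, norm_inv, habsG, habsK, habsu, hinv]
    rw [hexp, hq, show Real.sqrt ((-(c₁*t) - 1/2)^2 + (c₂*t)^2)
      = Real.sqrt ((c₁*(-t) - 1/2)^2 + c₂^2*(-t)^2) by congr 1; ring]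
    field_simp
  have hL0 : 0 < Real.log (1 / ‖z‖) :=
    Real.log_pos (by rw [lt_div_iff₀ hr0]; linarith)
  have hPpos : 0 < Real.exp (-c₁ * Real.log (1 / ‖z‖) ^ 2) / ‖z‖ :=
    div_pos (Real.exp_pos _) hr0
  have hs : Real.sqrt ((c₁ * Real.log (1 / ‖z‖) - 1 / 2) ^ 2 +
        c₂ ^ 2 * Real.log (1 / ‖z‖) ^ 2) <
      Real.sqrt ((1 / 2 + c₁ * Real.log (1 / ‖z‖)) ^ 2 +
        c₂ ^ 2 * Real.log (1 / ‖z‖) ^ 2) :=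
    Real.sqrt_lt_sqrt (by positivity) (by nlinarith [mul_pos hc₁ hL0])
  have E3 : ‖((fderiv ℝ h z 1 + Complex.I * fderiv ℝ h z Complex.I) / 2)‖ <
      ‖((fderiv ℝ h z 1 - Complex.I * fderiv ℝ h z Complex.I) / 2)‖ := by
    rw [E1, E2]
    exact mul_lt_mul_of_pos_left hs hPpos
  refine ⟨E1, E2, E3, ?_⟩
  rw [norm_div, E1, E2, mul_div_mul_left _ _ (ne_of_gt hPpos)]
  rw [show (1 / 2 + c₁ * Real.log (1 / ‖z‖)) ^ 2
    = (c₁ * Real.log (1 / ‖z‖) + 1 / 2) ^ 2 by ring]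
end
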